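/- Let J be a closed interval. The set AC(J) of absolutely continuous functions J → ℝ is a closed subset of the space CBV(J) of continuous functions of bounded variation equipped with the total variation norm ‖F‖_bv = sup_J |F| + var F. -/

import Mathlib

open Set Filter

/-- `F` is absolutely continuous on `[a,b]`. -/
def ACOn (F : ℝ → ℝ) (a b : ℝ) : Prop :=
  ∀ ε > (0 : ℝ), ∃ δ > (0 : ℝ), ∀ (m : ℕ) (u v : Fin m → ℝ),
    (∀ i, a ≤ u i ∧ u i ≤ v i ∧ v i ≤ b) →
    (Pairwise fun i j => Disjoint (Ioo (u i) (v i)) (Ioo (u j) (v j))) →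
    (∑ i, (v i - u i)) < δ → (∑ i, |F (v i) - F (u i)|) < ε

lemma evar_sub_le (f g : ℝ → ℝ) (s : Set ℝ) :
    eVariationOn (fun t => f t - g t) s ≤ eVariationOn f s + eVariationOn g s := by
  rw [eVariationOn]
  apply iSup_le
  rintro ⟨n, ⟨u, hu, us⟩⟩
  calc ∑ i ∈ Finset.range n, edist ((fun t => f t - g t) (u (i+1))) ((fun t => f t - g t) (u i))
      ≤ ∑ i ∈ Finset.range n,
        (edist (f (u (i+1))) (f (u i)) + edist (g (u (i+1))) (g (u i))) := by
        apply Finset.sum_le_sum; intro i _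
        simp only [sub_eq_add_neg]
        refine le_trans (edist_add_add_le _ _ _ _) ?_
        simp [edist_neg_neg]
    _ = (∑ i ∈ Finset.range n, edist (f (u (i+1))) (f (u i)))
        + ∑ i ∈ Finset.range n, edist (g (u (i+1))) (g (u i)) := Finset.sum_add_distrib
    _ ≤ eVariationOn f s + eVariationOn g s :=
        add_le_add (eVariationOn.sum_le (f := f) (n := n) hu us) (eVariationOn.sum_le (f := g) (n := n) hu us)

lemma sum_edist_le_evar (h : ℝ → ℝ) (a b : ℝ) (hab : a ≤ b) (m : ℕ) (u v : Fin m → ℝ)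
    (hm : ∀ i, a ≤ u i ∧ u i ≤ v i ∧ v i ≤ b)
    (hd : Pairwise fun i j => Disjoint (Ioo (u i) (v i)) (Ioo (u j) (v j))) :
    (∑ i, edist (h (v i)) (h (u i))) ≤ eVariationOn h (Icc a b) := by
  classical
  set u₂ : Fin m → ℝ := fun i => if u i < v i then u i else b with hu₂
  set v₂ : Fin m → ℝ := fun i => if u i < v i then v i else b with hv₂
  have hm₂ : ∀ i, a ≤ u₂ i ∧ u₂ i ≤ v₂ i ∧ v₂ i ≤ b := by
    intro i
    by_cases hi : u i < v i <;> simp [hu₂, hv₂, hi, hab, (hm i).1, (hm i).2.1, (hm i).2.2]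
  have hIoo : ∀ i, Ioo (u₂ i) (v₂ i) ⊆ Ioo (u i) (v i) := by
    intro i
    by_cases hi : u i < v i <;> simp [hu₂, hv₂, hi]
  have hd₂ : Pairwise fun i j => Disjoint (Ioo (u₂ i) (v₂ i)) (Ioo (u₂ j) (v₂ j)) :=
    fun i j hij => ((hd hij).mono (hIoo i) (hIoo j))
  have hdeg : ∀ i, u₂ i < v₂ i ∨ (u₂ i = b ∧ v₂ i = b) := by
    intro i
    by_cases hi : u i < v i <;> simp [hu₂, hv₂, hi]
  -- sort
  set w : Fin m → ℝ ×ₗ ℝ := fun i => toLex (u₂ i, v₂ i) with hw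
  set σ := Tuple.sort w with hσ
  have hmono : Monotone (w ∘ σ) := Tuple.monotone_sort w
  set u' : Fin m → ℝ := fun i => u₂ (σ i) with hu'
  set v' : Fin m → ℝ := fun i => v₂ (σ i) with hv'
  have hlex : ∀ i j : Fin m, i ≤ j →
      u' i < u' j ∨ (u' i = u' j ∧ v' i ≤ v' j) := by
    intro i j hij
    have := hmono hij
    simpa [hw, Prod.Lex.le_iff] using this
  have hkey : ∀ i j : Fin m, i < j → v' i ≤ u' j := by
    intro i j hij
    by_contra hcon
    push_neg at hcon
    have hle : u' i ≤ u' j := by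
      rcases hlex i j hij.le with h1 | ⟨h1, _⟩
      · exact h1.le
      · exact h1.le
    have hne : σ i ≠ σ j := fun e => hij.ne (σ.injective e)
    rcases hdeg (σ j) with hj | ⟨hj1, hj2⟩
    · -- both nondegenerate: common point
      set x := (u' j + min (v' i) (v' j)) / 2 with hx
      have hxi : x ∈ Ioo (u₂ (σ i)) (v₂ (σ i)) := by
        constructor
        · have : u' i ≤ u' j := hle
          have : u' j < x := by
            have : u' j < min (v' i) (v' j) := lt_min hcon hj
            simp only [hx]; linarith
          exact lt_of_le_of_lt hle this
        · have : x < min (v' i) (v' j) := by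
            have : u' j < min (v' i) (v' j) := lt_min hcon hj
            simp only [hx]; linarith
          exact lt_of_lt_of_le this (min_le_left _ _)
      have hxj : x ∈ Ioo (u₂ (σ j)) (v₂ (σ j)) := by
        constructor
        · have : u' j < min (v' i) (v' j) := lt_min hcon hj
          simp only [hx]; linarith
        · have h1 : u' j < min (v' i) (v' j) := lt_min hcon hj
          have : x < min (v' i) (v' j) := by simp only [hx]; linarith
          exact lt_of_lt_of_le this (min_le_right _ _)
      exact Set.disjoint_left.mp (hd₂ hne) hxi hxj
    · -- j degenerate at b
      have hvb : v' i ≤ u' j := le_trans ((hm₂ (σ i)).2.2) hj1.ge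
      exact absurd hvb (not_le.mpr hcon)
  -- ℕ-indexed
  set u₃ : ℕ → ℝ := fun n => if hn : n < m then u' ⟨n, hn⟩ else b with hu₃
  set v₃ : ℕ → ℝ := fun n => if hn : n < m then v' ⟨n, hn⟩ else b with hv₃
  have h3a : ∀ n, u₃ n ≤ v₃ n := by
    intro n; by_cases hn : n < m <;> simp [hu₃, hv₃, hn, show ∀ i, u' i ≤ v' i from fun i => (hm₂ (σ i)).2.1]
  have h3b : ∀ n, v₃ n ≤ u₃ (n + 1) := by
    intro n
    by_cases hn1 : n + 1 < m
    · have hn : n < m := by omega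
      simp only [hu₃, hv₃, dif_pos hn, dif_pos hn1]
      exact hkey ⟨n, hn⟩ ⟨n + 1, hn1⟩ (by simp)
    · simp only [hu₃, hv₃, dif_neg hn1]
      by_cases hn : n < m
      · simp [dif_pos hn, show ∀ i, v' i ≤ b from fun i => (hm₂ (σ i)).2.2]
      · simp [dif_neg hn]
  have h3mem : ∀ n, u₃ n ∈ Icc a b ∧ v₃ n ∈ Icc a b := by
    intro n
    by_cases hn : n < m
    · simp only [hu₃, hv₃, dif_pos hn]
      exact ⟨⟨(hm₂ _).1, le_trans (hm₂ _).2.1 (hm₂ _).2.2⟩,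
        ⟨le_trans (hm₂ _).1 (hm₂ _).2.1, (hm₂ _).2.2⟩⟩
    · simp [hu₃, hv₃, dif_neg hn, hab]
  -- interleaved sequence
  set p : ℕ → ℝ := fun n => if n % 2 = 0 then u₃ (n / 2) else v₃ (n / 2) with hp
  have hpmono : Monotone p := by
    apply monotone_nat_of_le_succ
    intro n
    rcases Nat.even_or_odd n with ⟨k, hk⟩ | ⟨k, hk⟩
    · have e1 : n % 2 = 0 := by omega
      have e2 : (n + 1) % 2 = 1 := by omega
      have e3 : (n + 1) / 2 = n / 2 := by omega
      simp only [hp, e1, e2, e3]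
      simpa using h3a (n / 2)
    · have e1 : n % 2 = 1 := by omega
      have e2 : (n + 1) % 2 = 0 := by omega
      have e3 : (n + 1) / 2 = n / 2 + 1 := by omega
      simp only [hp, e1, e2, e3]
      simpa using h3b (n / 2)
  have hpmem : ∀ n, p n ∈ Icc a b := by
    intro n
    by_cases hn : n % 2 = 0
    · simp only [hp, if_pos hn]; exact (h3mem _).1
    · simp only [hp, if_neg hn]; exact (h3mem _).2
  have hvar := eVariationOn.sum_le (f := h) (n := 2 * m) hpmono hpmem
  -- p values
  have hp2 : ∀ i : Fin m, p (2 * i) = u' i ∧ p (2 * i + 1) = v' i := by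
    intro i
    have e1 : (2 * (i : ℕ)) % 2 = 0 := by omega
    have e2 : (2 * (i : ℕ) + 1) % 2 = 1 := by omega
    have e3 : (2 * (i : ℕ)) / 2 = (i : ℕ) := by omega
    have e4 : (2 * (i : ℕ) + 1) / 2 = (i : ℕ) := by omega
    constructor
    · simp only [hp, e1, e3, if_true, hu₃, dif_pos i.isLt]
    · simp only [hp, e2, e4, hv₃]
      norm_num [dif_pos i.isLt]
  -- sum inequality
  have hsub : (∑ i : Fin m, edist (h (v' i)) (h (u' i))) ≤
      ∑ j ∈ Finset.range (2 * m), edist (h (p (j + 1))) (h (p j)) := by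
    have hinj : ∀ x ∈ Finset.range m, ∀ y ∈ Finset.range m, 2 * x = 2 * y → x = y :=
      fun x _ y _ e => by omega
    have himg : ((Finset.range m).image fun i => 2 * i) ⊆ Finset.range (2 * m) := by
      intro j hj
      simp only [Finset.mem_image, Finset.mem_range] at hj ⊢
      omega
    calc (∑ i : Fin m, edist (h (v' i)) (h (u' i)))
        = ∑ i : Fin m, edist (h (p (2 * i + 1))) (h (p (2 * i))) := by
          refine Finset.sum_congr rfl fun i _ => by rw [(hp2 i).1, (hp2 i).2]
      _ = ∑ i ∈ Finset.range m, edist (h (p (2 * i + 1))) (h (p (2 * i))) :=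
          Fin.sum_univ_eq_sum_range (fun i => edist (h (p (2 * i + 1))) (h (p (2 * i)))) m
      _ = ∑ j ∈ (Finset.range m).image (fun i => 2 * i),
            edist (h (p (j + 1))) (h (p j)) :=
          (Finset.sum_image (f := fun j => edist (h (p (j + 1))) (h (p j))) hinj).symm
      _ ≤ ∑ j ∈ Finset.range (2 * m), edist (h (p (j + 1))) (h (p j)) :=
          Finset.sum_le_sum_of_subset himg
  have hperm : (∑ i : Fin m, edist (h (v₂ i)) (h (u₂ i)))
      = ∑ i : Fin m, edist (h (v' i)) (h (u' i)) :=
    (Equiv.sum_comp σ fun i => edist (h (v₂ i)) (h (u₂ i))).symm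
  have heq : (∑ i, edist (h (v i)) (h (u i))) = ∑ i : Fin m, edist (h (v₂ i)) (h (u₂ i)) := by
    refine Finset.sum_congr rfl fun i _ => ?_
    by_cases hi : u i < v i
    · simp [hu₂, hv₂, hi]
    · have : u i = v i := le_antisymm (hm i).2.1 (not_lt.mp hi)
      simp [hu₂, hv₂, hi, this]
  calc (∑ i, edist (h (v i)) (h (u i)))
      = ∑ i : Fin m, edist (h (v' i)) (h (u' i)) := by rw [heq, hperm]
    _ ≤ ∑ j ∈ Finset.range (2 * m), edist (h (p (j + 1))) (h (p j)) := hsub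
    _ ≤ eVariationOn h (Icc a b) := hvar

/-- The absolutely continuous functions on a closed interval `J` form a closed subset of the
space of continuous functions of bounded variation on `J` with the total variation norm
(stated as sequential closedness). -/
theorem stmt_10 (a b : ℝ) (hab : a ≤ b) (F : ℕ → ℝ → ℝ) (G : ℝ → ℝ)
    (hFc : ∀ k, ContinuousOn (F k) (Icc a b))
    (hFbv : ∀ k, BoundedVariationOn (F k) (Icc a b))
    (hFac : ∀ k, ACOn (F k) a b)
    (hGc : ContinuousOn G (Icc a b)) (hGbv : BoundedVariationOn G (Icc a b))
    (hconv : Tendsto (fun k => (⨆ t : Icc a b, |F k t - G t|) +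
        (eVariationOn (fun t => F k t - G t) (Icc a b)).toReal) atTop (nhds 0)) :
    ACOn G a b := by
  intro ε hε
  obtain ⟨N, hN⟩ := Metric.tendsto_atTop.mp hconv (ε / 2) (by linarith)
  have hN' := hN N le_rfl
  rw [Real.dist_eq, sub_zero] at hN'
  set h : ℝ → ℝ := fun t => F N t - G t with hh
  have hsup0 : 0 ≤ ⨆ t : Icc a b, |F N t - G t| := Real.iSup_nonneg fun t => abs_nonneg _
  have hvar0 : 0 ≤ (eVariationOn h (Icc a b)).toReal := ENNReal.toReal_nonneg
  have hvar2 : (eVariationOn h (Icc a b)).toReal < ε / 2 := by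
    have habs := le_abs_self ((⨆ t : Icc a b, |F N t - G t|) +
      (eVariationOn (fun t => F N t - G t) (Icc a b)).toReal)
    have : (eVariationOn (fun t => F N t - G t) (Icc a b)).toReal < ε / 2 := by linarith
    exact this
  have hfin : eVariationOn h (Icc a b) ≠ ⊤ :=
    ne_top_of_le_ne_top (ENNReal.add_ne_top.2 ⟨hFbv N, hGbv⟩) (evar_sub_le (F N) G (Icc a b))
  obtain ⟨δ, hδpos, hδ⟩ := hFac N (ε / 2) (by linarith)
  refine ⟨δ, hδpos, ?_⟩
  intro m u v hm hd hsum
  have hkey := sum_edist_le_evar h a b hab m u v hm hd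
  have hto : (∑ i, |h (v i) - h (u i)|) ≤ (eVariationOn h (Icc a b)).toReal := by
    calc (∑ i, |h (v i) - h (u i)|)
        = ∑ i, (edist (h (v i)) (h (u i))).toReal := by
          refine Finset.sum_congr rfl fun i _ => ?_
          rw [← Real.dist_eq, dist_edist]
      _ = (∑ i, edist (h (v i)) (h (u i))).toReal :=
          (ENNReal.toReal_sum fun i _ => edist_ne_top _ _).symm
      _ ≤ _ := ENNReal.toReal_mono hfin hkey
  have hFsum := hδ m u v hm hd hsum
  calc (∑ i, |G (v i) - G (u i)|)
      ≤ ∑ i, (|F N (v i) - F N (u i)| + |h (v i) - h (u i)|) := by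
        refine Finset.sum_le_sum fun i _ => ?_
        have he : G (v i) - G (u i) = (F N (v i) - F N (u i)) - (h (v i) - h (u i)) := by
          simp only [hh]; ring
        rw [he]
        exact abs_sub _ _
    _ = (∑ i, |F N (v i) - F N (u i)|) + ∑ i, |h (v i) - h (u i)| := Finset.sum_add_distrib
    _ < ε / 2 + ε / 2 := add_lt_add_of_lt_of_le hFsum (le_trans hto hvar2.le)
    _ = ε := by ring
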